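/- Let M = ⟨S, A, T, s0⟩ be an nrMDP, λ a labeling function, and R, H two Mealy reward machines over the same observations Z and labeling λ. Let σh = s0 a0 s1 ⋯ s_k be a history of M, and let u_i^R and u_i^H be the node sequences of R and H along σh (u_0^R = u0^R, u_{i+1}^R = δ_u^R(u_i^R, λ(a_i, s_{i+1})), and analogously for H). Then the sequence ⟨s_0, u_0^R, u_0^H⟩ a_0 ⟨s_1, u_1^R, u_1^H⟩ a_1 ⋯ ⟨s_k, u_k^R, u_k^H⟩ is a positive-transition-probability path of the monitored homing product M ⊗↻_λ R,H avoiding CE if and only if δ*_r^R(u0^R, σh) = δ*_r^H(u0^H, σh); moreover, every positive-transition-probability path of the monitored homing product from the initial state ⟨s0, u0^R, u0^H⟩ that uses only actions in A and avoids CE is of this form for some history σh of M. In particular, along every path of the monitored homing product avoiding CE, R and H produce identical reward traces. -/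

import Mathlib

open MeasureTheory Filter

attribute [local instance] Classical.propDecidable

/-- A non-rewarding Markov decision process over finite state set `S` and
finite action set `A`. -/
structure NRMDP (S A : Type) [Fintype S] [Fintype A] where
  T : S → A → S → ℝ
  T_nonneg : ∀ s a s', 0 ≤ T s a s'
  T_le_one : ∀ s a s', T s a s' ≤ 1
  T_sum_one : ∀ s a, ∑ s', T s a s' = 1
  s0 : S

/-- A Mealy reward machine over the finite observation set `Z` with
distinguished observation `null`. -/
structure MRM (U Z : Type) [Fintype U] [Fintype Z] (null : Z) where
  u0 : U
  δu : U → Z → U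
  δr : U → Z → ℝ
  c : ℝ
  δu_null : ∀ u, δu u null = u
  δr_null : ∀ u, δr u null = c

variable {S A U Z St Ac : Type}

/-- `ValidFrom T s steps` : the alternating sequence starting at `s` whose
successive (action, next-state) steps are `steps` has positive transition
probability at every step. -/
def ValidFrom (T : St → Ac → St → ℝ) : St → List (Ac × St) → Prop
  | _, [] => True
  | s, step :: rest => 0 < T s step.1 step.2 ∧ ValidFrom T step.2 rest

/-- Transition function of the synchronized product `M ⊗_λ R`. -/
noncomputable def prodT (T : S → A → S → ℝ) (lab : A → S → Z) (δu : U → Z → U) :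
    S × U → A → S × U → ℝ :=
  fun p a q => if q.2 = δu p.2 (lab a q.1) then T p.1 a q.1 else 0

/-- The map `B` (on the step list of a history), lifting a history of `M`
to a history of the synchronized product by tracking the MRM node. -/
def liftHist (lab : A → S → Z) (δu : U → Z → U) : U → List (A × S) → List (A × (S × U))
  | _, [] => []
  | u, (a, s') :: rest =>
      (a, (s', δu u (lab a s'))) :: liftHist lab δu (δu u (lab a s')) rest

variable {UR UH : Type}

/-- Transition function of the monitored homing product `M ⊗↻_λ R,H`.
States are `Option (S × UR × UH)` with `none` playing the role of the
counter-example state `CE`; actions are `A ⊕ Unit` with `Sum.inr ()`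
playing the role of the reset action `↻`. -/
noncomputable def monT [Fintype S] [Fintype UR] [Fintype UH] [Fintype Z] {null : Z}
    (T : S → A → S → ℝ) (lab : A → S → Z)
    (R : MRM UR Z null) (H : MRM UH Z null) (s0 : S) :
    Option (S × UR × UH) → A ⊕ Unit → Option (S × UR × UH) → ℝ
  | none, _, none => 1
  | none, _, some _ => 0
  | some x, Sum.inl a, some y =>
      if R.δr x.2.1 (lab a y.1) = H.δr x.2.2 (lab a y.1) ∧
         y.2.1 = R.δu x.2.1 (lab a y.1) ∧ y.2.2 = H.δu x.2.2 (lab a y.1)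
      then T x.1 a y.1 else 0
  | some x, Sum.inl a, none =>
      ∑ s' : S, if R.δr x.2.1 (lab a s') ≠ H.δr x.2.2 (lab a s') then T x.1 a s' else 0
  | some _, Sum.inr _, some y => if y = (s0, R.u0, H.u0) then 1 else 0
  | some _, Sum.inr _, none => 0

/-- The reward trace `δ*_r(u, ·)` assigned by an MRM to (the step list of)
a history. -/
def rewardTrace (lab : A → S → Z) (δu : U → Z → U) (δr : U → Z → ℝ) :
    U → List (A × S) → List ℝ
  | _, [] => []
  | u, (a, s') :: rest =>
      δr u (lab a s') :: rewardTrace lab δu δr (δu u (lab a s')) rest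

/-- Lifting of (the step list of) a history of `M` to a step list of the
monitored homing product, tracking the nodes of both machines. -/
def monLift [Fintype UR] [Fintype UH] [Fintype Z] {null : Z}
    (lab : A → S → Z) (R : MRM UR Z null) (H : MRM UH Z null) :
    UR × UH → List (A × S) → List ((A ⊕ Unit) × Option (S × UR × UH))
  | _, [] => []
  | w, (a, s') :: rest =>
      (Sum.inl a, some (s', R.δu w.1 (lab a s'), H.δu w.2 (lab a s'))) ::
        monLift lab R H (R.δu w.1 (lab a s'), H.δu w.2 (lab a s')) rest

/-- For a history `σh` of `M`, the lifted triple sequence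
is a positive-transition-probability path of the monitored homing product
avoiding `CE` iff `R` and `H` assign equal reward traces to `σh`; moreover
every positive path from the initial state using only actions of `A` and
avoiding `CE` arises this way, and in particular `R` and `H` produce
identical reward traces along it. -/
lemma monT_pos_iff
    [Fintype S] [Fintype A] [Fintype UR] [Fintype UH] [Fintype Z]
    (M : NRMDP S A) (null : Z) (lab : A → S → Z)
    (R : MRM UR Z null) (H : MRM UH Z null) :
    ∀ (h : List (A × S)) (s : S) (w : UR × UH), ValidFrom M.T s h →
      (ValidFrom (monT M.T lab R H M.s0) (some (s, w.1, w.2))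
          (monLift lab R H w h) ↔
        rewardTrace lab R.δu R.δr w.1 h = rewardTrace lab H.δu H.δr w.2 h) := by
  intro h
  induction h with
  | nil => intro s w _; simp [monLift, ValidFrom, rewardTrace]
  | cons step rest ih =>
    rintro s ⟨uR, uH⟩ ⟨hpos, hrest⟩
    obtain ⟨a, s'⟩ := step
    simp only [monLift, ValidFrom, rewardTrace, monT, List.cons.injEq]
    constructor
    · rintro ⟨h1, h2⟩
      by_cases heq : R.δr uR (lab a s') = H.δr uH (lab a s')
      · exact ⟨heq,
          (ih s' (R.δu uR (lab a s'), H.δu uH (lab a s')) hrest).1 h2⟩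
      · rw [if_neg (by tauto)] at h1
        exact absurd h1 (lt_irrefl 0)
    · rintro ⟨h1, h2⟩
      refine ⟨?_, (ih s' (R.δu uR (lab a s'), H.δu uH (lab a s')) hrest).2 h2⟩
      simpa [h1] using hpos

lemma monT_paths_lift
    [Fintype S] [Fintype A] [Fintype UR] [Fintype UH] [Fintype Z]
    (M : NRMDP S A) (null : Z) (lab : A → S → Z)
    (R : MRM UR Z null) (H : MRM UH Z null) :
    ∀ (steps : List ((A ⊕ Unit) × Option (S × UR × UH))) (s : S) (w : UR × UH),
      ValidFrom (monT M.T lab R H M.s0) (some (s, w.1, w.2)) steps →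
      (∀ st ∈ steps, (∃ a : A, st.1 = Sum.inl a) ∧ st.2 ≠ none) →
      ∃ h : List (A × S), ValidFrom M.T s h ∧
        steps = monLift lab R H w h := by
  intro steps
  induction steps with
  | nil => intro s w _ _; exact ⟨[], trivial, rfl⟩
  | cons st rest ih =>
    rintro s ⟨uR, uH⟩ ⟨hpos, hrest⟩ hall
    obtain ⟨⟨a, ha⟩, hne⟩ := hall st List.mem_cons_self
    obtain ⟨α, y⟩ := st
    cases ha
    cases y with
    | none => exact absurd rfl hne
    | some y =>
      obtain ⟨s', uR', uH'⟩ := y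
      simp only [monT] at hpos
      by_cases hc : R.δr uR (lab a s') = H.δr uH (lab a s') ∧
          uR' = R.δu uR (lab a s') ∧ uH' = H.δu uH (lab a s')
      · obtain ⟨hc1, hc2, hc3⟩ := hc
        obtain ⟨h, hv, heq⟩ := ih s' (uR', uH') (by simpa using hrest)
          (fun st hst => hall st (List.mem_cons_of_mem _ hst))
        refine ⟨(a, s') :: h, ⟨by simpa [hc1, hc2, hc3] using hpos, hv⟩, ?_⟩
        simp [monLift, hc2, hc3, heq]
      · rw [if_neg hc] at hpos; exact absurd hpos (lt_irrefl 0)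

theorem monitored_paths_characterization
    [Fintype S] [Fintype A] [Fintype UR] [Fintype UH] [Fintype Z]
    (M : NRMDP S A) (null : Z) (lab : A → S → Z)
    (R : MRM UR Z null) (H : MRM UH Z null) :
    (∀ h : List (A × S), ValidFrom M.T M.s0 h →
      (ValidFrom (monT M.T lab R H M.s0) (some ((M.s0 : S), (R.u0 : UR), (H.u0 : UH)))
          (monLift lab R H (R.u0, H.u0) h) ↔
        rewardTrace lab R.δu R.δr R.u0 h = rewardTrace lab H.δu H.δr H.u0 h)) ∧
    (∀ steps : List ((A ⊕ Unit) × Option (S × UR × UH)),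
      ValidFrom (monT M.T lab R H M.s0) (some ((M.s0 : S), (R.u0 : UR), (H.u0 : UH))) steps →
      (∀ st ∈ steps, (∃ a : A, st.1 = Sum.inl a) ∧ st.2 ≠ none) →
      ∃ h : List (A × S), ValidFrom M.T M.s0 h ∧
        steps = monLift lab R H (R.u0, H.u0) h ∧
        rewardTrace lab R.δu R.δr R.u0 h = rewardTrace lab H.δu H.δr H.u0 h) := by
  constructor
  · intro h hv
    exact monT_pos_iff M null lab R H h M.s0 (R.u0, H.u0) hv
  · intro steps hv hall
    obtain ⟨h, hvh, heq⟩ := monT_paths_lift M null lab R H steps M.s0 (R.u0, H.u0) hv hall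
    refine ⟨h, hvh, heq, ?_⟩
    exact (monT_pos_iff M null lab R H h M.s0 (R.u0, H.u0) hvh).1 (heq ▸ hv)
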